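/- Suppose X₂ − X₁ − Y₁ − Y₂ forms a Markov chain of finite-valued random variables. Then for every v ∈ 𝓘_{X₁,Y₁} there exists w ∈ 𝓘_{X₂,Y₂} such that w_X ≤ v_X, w_Y ≤ v_Y, w_{XY} ≤ v_{XY}, and I(X₂;Y₂) − w_X − w_Y + w_{XY} ≤ I(X₁;Y₁) − v_X − v_Y + v_{XY}. -/

import Mathlib

open scoped BigOperators Pointwise Classical

noncomputable section

namespace GW

/-- A probability mass function on a finite type. -/
def IsPMF {α : Type} [Fintype α] (p : α → ℝ) : Prop :=
  (∀ a, 0 ≤ p a) ∧ ∑ a, p a = 1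

/-- Distribution (pmf) of the random variable `f` under the pmf `p`. -/
def dist {α β : Type} [Fintype α] (p : α → ℝ) (f : α → β) : β → ℝ :=
  fun b => ∑ a, if f a = b then p a else 0

/-- Shannon entropy (base 2) of the random variable `f` under the pmf `p`. -/
def H {α β : Type} [Fintype α] [Fintype β] (p : α → ℝ) (f : α → β) : ℝ :=
  ∑ b, -(dist p f b * Real.logb 2 (dist p f b))

/-- Mutual information `I(f; g)` under `p`. -/
def I2 {α β γ : Type} [Fintype α] [Fintype β] [Fintype γ]
    (p : α → ℝ) (f : α → β) (g : α → γ) : ℝ :=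
  H p f + H p g - H p (fun a => (f a, g a))

/-- Conditional entropy `H(f | g)` under `p`. -/
def Hc {α β γ : Type} [Fintype α] [Fintype β] [Fintype γ]
    (p : α → ℝ) (f : α → β) (g : α → γ) : ℝ :=
  H p (fun a => (f a, g a)) - H p g

/-- Conditional mutual information `I(f; g | h)` under `p`. -/
def Ic {α β γ δ : Type} [Fintype α] [Fintype β] [Fintype γ] [Fintype δ]
    (p : α → ℝ) (f : α → β) (g : α → γ) (h : α → δ) : ℝ :=
  Hc p f h + Hc p g h - Hc p (fun a => (f a, g a)) h

/-- Independence of the random variables `f` and `g` under `p`. -/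
def Indep {α β γ : Type} [Fintype α] (p : α → ℝ) (f : α → β) (g : α → γ) : Prop :=
  ∀ b c, dist p (fun a => (f a, g a)) (b, c) = dist p f b * dist p g c

/-- `q` is a joint pmf on `X × Y × U` whose `(X,Y)`-marginal is `p`; i.e. `U` is an
auxiliary random variable defined jointly with `(X,Y)` via a conditional pmf `p_{U|XY}`. -/
def IsAux {X Y U : Type} [Fintype X] [Fintype Y] [Fintype U]
    (p : X × Y → ℝ) (q : X × Y × U → ℝ) : Prop :=
  IsPMF q ∧ ∀ x y, (∑ u, q (x, y, u)) = p (x, y)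

/-- Coordinate map onto `X`. -/
def cX {X Y U : Type} : X × Y × U → X := fun a => a.1
/-- Coordinate map onto `Y`. -/
def cY {X Y U : Type} : X × Y × U → Y := fun a => a.2.1
/-- Coordinate map onto `U`. -/
def cU {X Y U : Type} : X × Y × U → U := fun a => a.2.2
/-- Coordinate map onto `X × Y`. -/
def cXY {X Y U : Type} : X × Y × U → X × Y := fun a => (a.1, a.2.1)

/-- The mutual information region `𝓘_{XY}`. -/
def MIRegion {X Y : Type} [Fintype X] [Fintype Y] (p : X × Y → ℝ) : Set (ℝ × ℝ × ℝ) :=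
  { v | ∃ (U : Type) (_ : Fintype U) (q : X × Y × U → ℝ), IsAux p q ∧
      v = (I2 q cX cU, I2 q cY cU, I2 q cXY cU) }

/-- The outer region `𝓘ᵒ_{XY}`. -/
def OuterRegion {X Y : Type} [Fintype X] [Fintype Y] (p : X × Y → ℝ) : Set (ℝ × ℝ × ℝ) :=
  { v | 0 ≤ v.1 ∧ 0 ≤ v.2.1 ∧ v.1 + v.2.1 - v.2.2 ≤ I2 p Prod.fst Prod.snd ∧
        0 ≤ v.2.2 - v.2.1 ∧ v.2.2 - v.2.1 ≤ Hc p Prod.fst Prod.snd ∧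
        0 ≤ v.2.2 - v.1 ∧ v.2.2 - v.1 ≤ Hc p Prod.snd Prod.fst }

/-- Maximal interaction information `G_NNI(X; Y)`. -/
def GNNI {X Y : Type} [Fintype X] [Fintype Y] (p : X × Y → ℝ) : ℝ :=
  sSup { r | ∃ (U : Type) (_ : Fintype U) (q : X × Y × U → ℝ), IsAux p q ∧
      r = Ic q cX cY cU - I2 p Prod.fst Prod.snd }

/-- Asymmetric private interaction information `G_PNI(X → Y)`. -/
def GPNI {X Y : Type} [Fintype X] [Fintype Y] (p : X × Y → ℝ) : ℝ :=
  sSup { r | ∃ (U : Type) (_ : Fintype U) (q : X × Y × U → ℝ), IsAux p q ∧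
      Indep q cU cX ∧ r = Ic q cX cY cU - I2 p Prod.fst Prod.snd }

/-- Symmetric private interaction information `G_PPI(X; Y)`. -/
def GPPI {X Y : Type} [Fintype X] [Fintype Y] (p : X × Y → ℝ) : ℝ :=
  sSup { r | ∃ (U : Type) (_ : Fintype U) (q : X × Y × U → ℝ), IsAux p q ∧
      Indep q cU cX ∧ Indep q cU cY ∧ r = Ic q cX cY cU - I2 p Prod.fst Prod.snd }


-- ===== auxiliary lemmas =====
set_option linter.unusedSectionVars false
set_option maxHeartbeats 1000000

section Aux

variable {α β γ δ : Type} [Fintype α] [Fintype β] [Fintype γ] [Fintype δ]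

lemma dist_nonneg' {p : α → ℝ} (hp : ∀ a, 0 ≤ p a) (f : α → β) (b : β) :
    0 ≤ dist p f b := by
  apply Finset.sum_nonneg; intro a _; split <;> simp [hp a]

lemma sum_dist (p : α → ℝ) (f : α → β) : ∑ b, dist p f b = ∑ a, p a := by
  unfold dist
  rw [Finset.sum_comm]
  refine Finset.sum_congr rfl fun a _ => ?_
  simp

lemma dist_comp (p : α → ℝ) (G : α → β) (g : β → γ) (c : γ) :
    dist p (fun a => g (G a)) c = dist (dist p G) g c := by
  unfold dist
  have h1 : ∀ b : β, (if g b = c then ∑ a, if G a = b then p a else 0 else 0)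
      = ∑ a, if b = G a then (if g b = c then p a else 0) else 0 := by
    intro b
    by_cases h : g b = c
    · rw [if_pos h]
      refine Finset.sum_congr rfl fun a _ => ?_
      by_cases h2 : G a = b
      · rw [if_pos h2, if_pos h2.symm, if_pos h]
      · rw [if_neg h2, if_neg (fun hh => h2 hh.symm)]
    · simp [h]
  calc (∑ a, if g (G a) = c then p a else 0)
      = ∑ a, ∑ b, (if b = G a then (if g b = c then p a else 0) else 0) := by
        refine Finset.sum_congr rfl fun a _ => by simp [Finset.sum_ite_eq']
    _ = ∑ b, (if g b = c then ∑ a, if G a = b then p a else 0 else 0) := by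
        rw [Finset.sum_comm]
        exact Finset.sum_congr rfl fun b _ => (h1 b).symm

lemma le_dist {p : α → ℝ} (hp : ∀ a, 0 ≤ p a) (f : α → β) (a : α) :
    p a ≤ dist p f (f a) := by
  have := Finset.single_le_sum (f := fun a' => if f a' = f a then p a' else 0)
    (fun a' _ => by split <;> simp [hp a']) (Finset.mem_univ a)
  simpa [dist] using this

lemma H_map (p : α → ℝ) (G : α → β) (g : β → γ) :
    H p (fun a => g (G a)) = H (dist p G) g := by
  unfold H
  refine Finset.sum_congr rfl fun c _ => ?_
  rw [dist_comp]

lemma H_pointwise (p : α → ℝ) (F : α → β) :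
    H p F = ∑ a, -(p a * Real.logb 2 (dist p F (F a))) := by
  unfold H
  have h1 : ∀ b, -(dist p F b * Real.logb 2 (dist p F b))
      = ∑ a, (if F a = b then -(p a * Real.logb 2 (dist p F b)) else 0) := by
    intro b
    set L := Real.logb 2 (dist p F b) with hL
    rw [dist, Finset.sum_mul, ← Finset.sum_neg_distrib]
    refine Finset.sum_congr rfl fun a _ => by split <;> simp
  calc (∑ b, -(dist p F b * Real.logb 2 (dist p F b)))
      = ∑ b, ∑ a, (if F a = b then -(p a * Real.logb 2 (dist p F b)) else 0) :=
        Finset.sum_congr rfl fun b _ => h1 b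
    _ = _ := by
        rw [Finset.sum_comm]
        refine Finset.sum_congr rfl fun a _ => ?_
        simp

end Aux
section Aux2
variable {α β γ δ ε : Type} [Fintype α] [Fintype β] [Fintype γ] [Fintype δ] [Fintype ε]

lemma H_relabel {σ : β → γ} (hσ : Function.Injective σ) (p : α → ℝ) (F : α → β) :
    H p (fun a => σ (F a)) = H p F := by
  rw [H_map]
  unfold H
  have key : ∀ b, dist (dist p F) σ (σ b) = dist p F b := by
    intro b
    unfold dist
    simp only [hσ.eq_iff]
    rw [Finset.sum_ite_eq' Finset.univ b]
    · simp
  rw [← Finset.sum_subset (Finset.subset_univ (Finset.univ.image σ))]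
  · rw [Finset.sum_image (fun x _ y _ h => hσ h)]
    exact Finset.sum_congr rfl fun b _ => by rw [key]
  · intro c _ hc
    have : dist (dist p F) σ c = 0 := by
      apply Finset.sum_eq_zero
      intro b _
      rw [if_neg]
      intro hb
      exact hc (Finset.mem_image.2 ⟨b, Finset.mem_univ b, hb⟩)
    simp [this]

lemma sum_mul_comp (p : α → ℝ) (G : α → β) (T : β → ℝ) :
    ∑ a, p a * T (G a) = ∑ v, dist p G v * T v := by
  unfold dist
  rw [Finset.sum_congr rfl (fun v (_ : v ∈ Finset.univ) => Finset.sum_mul ..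
    : ∀ v ∈ Finset.univ, (∑ a, if G a = v then p a else 0) * T v = ∑ a, (if G a = v then p a else 0) * T v)]
  rw [Finset.sum_comm]
  refine Finset.sum_congr rfl fun a _ => ?_
  rw [Finset.sum_congr rfl (fun v (_ : v ∈ Finset.univ) => by
    rw [ite_mul, zero_mul] : ∀ v ∈ Finset.univ, _ = if G a = v then p a * T v else 0)]
  simp

lemma sum_dist_pair_fst (p : α → ℝ) (f : α → β) (h : α → δ) (d : δ) :
    ∑ b, dist p (fun a => (f a, h a)) (b, d) = dist p h d := by
  unfold dist
  rw [Finset.sum_comm]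
  refine Finset.sum_congr rfl fun a _ => ?_
  by_cases hd : h a = d
  · simp [hd, Prod.ext_iff]
  · simp [hd, Prod.ext_iff]

lemma sum_dist_three (p : α → ℝ) (f : α → β) (g : α → γ) (k : α → δ) (x : β) (y : γ) :
    ∑ u, dist p (fun a => (f a, g a, k a)) (x, y, u) = dist p (fun a => (f a, g a)) (x, y) := by
  unfold dist
  rw [Finset.sum_comm]
  refine Finset.sum_congr rfl fun a _ => ?_
  by_cases hx : f a = x <;> by_cases hy : g a = y <;> simp [hx, hy, Prod.ext_iff]

lemma dist_pair_le (p : α → ℝ) (hp : ∀ a, 0 ≤ p a) (f : α → β) (g : α → γ) (h : α → δ)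
    (b : β) (c : γ) (d : δ) :
    dist p (fun a => ((f a, g a), h a)) ((b, c), d) ≤ dist p (fun a => (f a, h a)) (b, d) := by
  refine Finset.sum_le_sum fun a _ => ?_
  by_cases h1 : f a = b <;> by_cases h2 : g a = c <;> by_cases h3 : h a = d <;>
    simp [h1, h2, h3, Prod.ext_iff, hp a]

lemma IsPMF_dist {p : α → ℝ} (hp : IsPMF p) (F : α → β) : IsPMF (dist p F) :=
  ⟨fun b => dist_nonneg' hp.1 F b, by rw [sum_dist, hp.2]⟩

end Aux2
section Aux3
variable {α β γ δ : Type} [Fintype α] [Fintype β] [Fintype γ] [Fintype δ]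

lemma dist_le_h (p : α → ℝ) (hp : ∀ a, 0 ≤ p a) (f : α → β) (g : α → γ) (h : α → δ)
    (b : β) (c : γ) (d : δ) :
    dist p (fun a => ((f a, g a), h a)) ((b, c), d) ≤ dist p h d := by
  refine Finset.sum_le_sum fun a _ => ?_
  by_cases h1 : f a = b <;> by_cases h2 : g a = c <;> by_cases h3 : h a = d <;>
    simp [h1, h2, h3, Prod.ext_iff, hp a]

lemma Ic_expand (p : α → ℝ) (f : α → β) (g : α → γ) (h : α → δ) :
    Ic p f g h = H p (fun a => (f a, h a)) + H p (fun a => (g a, h a))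
      - H p (fun a => ((f a, g a), h a)) - H p h := by
  unfold Ic Hc; ring

lemma Ic_pointwise (p : α → ℝ) (f : α → β) (g : α → γ) (h : α → δ) :
    Ic p f g h = ∑ a, p a *
      (Real.logb 2 (dist p (fun x => ((f x, g x), h x)) ((f a, g a), h a))
       + Real.logb 2 (dist p h (h a))
       - Real.logb 2 (dist p (fun x => (f x, h x)) (f a, h a))
       - Real.logb 2 (dist p (fun x => (g x, h x)) (g a, h a))) := by
  rw [Ic_expand, H_pointwise p (fun a => (f a, h a)), H_pointwise p (fun a => (g a, h a)),
      H_pointwise p (fun a => ((f a, g a), h a)), H_pointwise p h,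
      ← Finset.sum_add_distrib, ← Finset.sum_sub_distrib, ← Finset.sum_sub_distrib]
  refine Finset.sum_congr rfl fun a _ => ?_
  ring

theorem Ic_nonneg {p : α → ℝ} (hp : IsPMF p) (f : α → β) (g : α → γ) (h : α → δ) :
    0 ≤ Ic p f g h := by
  have hlog2 : (0:ℝ) < Real.log 2 := Real.log_pos one_lt_two
  set T : (β × γ) × δ → ℝ := fun v =>
    dist p (fun x => (f x, h x)) (v.1.1, v.2) * dist p (fun x => (g x, h x)) (v.1.2, v.2) /
    (dist p (fun x => ((f x, g x), h x)) v * dist p h v.2) with hTdef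
  have key1 : ∀ a, (Real.log 2)⁻¹ * (p a - p a * T ((f a, g a), h a)) ≤
      p a * (Real.logb 2 (dist p (fun x => ((f x, g x), h x)) ((f a, g a), h a))
        + Real.logb 2 (dist p h (h a))
        - Real.logb 2 (dist p (fun x => (f x, h x)) (f a, h a))
        - Real.logb 2 (dist p (fun x => (g x, h x)) (g a, h a))) := by
    intro a
    rcases eq_or_lt_of_le (hp.1 a) with h0 | h0
    · rw [← h0]; simp
    · have hdf : 0 < dist p (fun x => (f x, h x)) (f a, h a) :=
        lt_of_lt_of_le h0 (le_dist hp.1 (fun x => (f x, h x)) a)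
      have hdg : 0 < dist p (fun x => (g x, h x)) (g a, h a) :=
        lt_of_lt_of_le h0 (le_dist hp.1 (fun x => (g x, h x)) a)
      have hdfg : 0 < dist p (fun x => ((f x, g x), h x)) ((f a, g a), h a) :=
        lt_of_lt_of_le h0 (le_dist hp.1 (fun x => ((f x, g x), h x)) a)
      have hdn : 0 < dist p h (h a) := lt_of_lt_of_le h0 (le_dist hp.1 h a)
      have hTa : T ((f a, g a), h a) =
          dist p (fun x => (f x, h x)) (f a, h a) * dist p (fun x => (g x, h x)) (g a, h a) /
          (dist p (fun x => ((f x, g x), h x)) ((f a, g a), h a) * dist p h (h a)) := by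
        simp only [hTdef]
      rw [hTa]
      set df := dist p (fun x => (f x, h x)) (f a, h a)
      set dg := dist p (fun x => (g x, h x)) (g a, h a)
      set dfg := dist p (fun x => ((f x, g x), h x)) ((f a, g a), h a)
      set dn := dist p h (h a)
      have hfrac : (0:ℝ) < df * dg / (dfg * dn) := by positivity
      have hlt := Real.log_le_sub_one_of_pos hfrac
      rw [Real.log_div (by positivity) (by positivity), Real.log_mul hdf.ne' hdg.ne',
          Real.log_mul hdfg.ne' hdn.ne'] at hlt
      have main : p a - p a * (df * dg / (dfg * dn)) ≤
          p a * (Real.log dfg + Real.log dn - Real.log df - Real.log dg) := by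
        nlinarith [mul_le_mul_of_nonneg_left hlt (hp.1 a)]
      have e3 : p a * (Real.logb 2 dfg + Real.logb 2 dn - Real.logb 2 df - Real.logb 2 dg)
          = (Real.log 2)⁻¹ *
            (p a * (Real.log dfg + Real.log dn - Real.log df - Real.log dg)) := by
        simp only [Real.logb]
        field_simp
        try ring
      rw [e3]
      exact mul_le_mul_of_nonneg_left main (inv_nonneg.mpr hlog2.le)
  rw [Ic_pointwise]
  have e1 : ∑ a, (Real.log 2)⁻¹ * (p a - p a * T ((f a, g a), h a)) ≤ ∑ a, p a *
      (Real.logb 2 (dist p (fun x => ((f x, g x), h x)) ((f a, g a), h a))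
       + Real.logb 2 (dist p h (h a))
       - Real.logb 2 (dist p (fun x => (f x, h x)) (f a, h a))
       - Real.logb 2 (dist p (fun x => (g x, h x)) (g a, h a))) :=
    Finset.sum_le_sum fun a _ => key1 a
  refine le_trans ?_ e1
  rw [← Finset.mul_sum]
  apply mul_nonneg (inv_nonneg.mpr hlog2.le)
  rw [Finset.sum_sub_distrib]
  have e2 : ∑ a, p a * T ((f a, g a), h a)
      = ∑ v, dist p (fun a => ((f a, g a), h a)) v * T v := sum_mul_comp p _ T
  rw [e2, hp.2]
  have step1 : ∀ v : (β × γ) × δ, dist p (fun a => ((f a, g a), h a)) v * T v ≤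
      dist p (fun x => (f x, h x)) (v.1.1, v.2) * dist p (fun x => (g x, h x)) (v.1.2, v.2) /
        dist p h v.2 := by
    intro v
    rcases eq_or_lt_of_le (dist_nonneg' hp.1 (fun a => ((f a, g a), h a)) v) with h0 | h0
    · rw [← h0, zero_mul]
      have h1 := dist_nonneg' hp.1 (fun x => (f x, h x)) (v.1.1, v.2)
      have h2 := dist_nonneg' hp.1 (fun x => (g x, h x)) (v.1.2, v.2)
      have h3 := dist_nonneg' hp.1 h v.2
      positivity
    · have hN : 0 < dist p h v.2 := by
        refine lt_of_lt_of_le h0 ?_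
        have := dist_le_h p hp.1 f g h v.1.1 v.1.2 v.2
        simpa using this
      refine le_of_eq ?_
      simp only [hTdef]
      field_simp
  have step2 : ∑ v : (β × γ) × δ, dist p (fun x => (f x, h x)) (v.1.1, v.2) *
      dist p (fun x => (g x, h x)) (v.1.2, v.2) / dist p h v.2 ≤ 1 := by
    have e4 : ∑ v : (β × γ) × δ, dist p (fun x => (f x, h x)) (v.1.1, v.2) *
        dist p (fun x => (g x, h x)) (v.1.2, v.2) / dist p h v.2
        = ∑ d, ∑ b, ∑ c, dist p (fun x => (f x, h x)) (b, d) *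
            dist p (fun x => (g x, h x)) (c, d) / dist p h d := by
      rw [Fintype.sum_prod_type, Finset.sum_comm]
      refine Finset.sum_congr rfl fun d _ => ?_
      rw [Fintype.sum_prod_type]
    rw [e4]
    calc (∑ d, ∑ b, ∑ c, dist p (fun x => (f x, h x)) (b, d) *
            dist p (fun x => (g x, h x)) (c, d) / dist p h d)
        ≤ ∑ d, dist p h d := by
          refine Finset.sum_le_sum fun d _ => ?_
          have e5 : (∑ b, ∑ c, dist p (fun x => (f x, h x)) (b, d) *
              dist p (fun x => (g x, h x)) (c, d) / dist p h d)
              = (∑ b, dist p (fun x => (f x, h x)) (b, d)) *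
                (∑ c, dist p (fun x => (g x, h x)) (c, d)) / dist p h d := by
            rw [Finset.sum_mul, Finset.sum_div]
            refine Finset.sum_congr rfl fun b _ => ?_
            rw [Finset.mul_sum, Finset.sum_div]
          rw [e5, sum_dist_pair_fst, sum_dist_pair_fst]
          rcases eq_or_lt_of_le (dist_nonneg' hp.1 h d) with h0 | h0
          · rw [← h0]; simp
          · rw [mul_div_assoc, div_self h0.ne', mul_one]
      _ = ∑ a, p a := sum_dist p h
      _ = 1 := hp.2
  have step3 : ∑ v, dist p (fun a => ((f a, g a), h a)) v * T v ≤ 1 :=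
    le_trans (Finset.sum_le_sum fun v _ => step1 v) step2
  linarith

lemma Ic_eq_zero_of_factor {p : α → ℝ} (hp : IsPMF p) {f : α → β} {g : α → γ} {h : α → δ}
    (hfac : ∀ b c d, dist p (fun x => ((f x, g x), h x)) ((b, c), d) * dist p h d
      = dist p (fun x => (f x, h x)) (b, d) * dist p (fun x => (g x, h x)) (c, d)) :
    Ic p f g h = 0 := by
  rw [Ic_pointwise]
  apply Finset.sum_eq_zero
  intro a _
  rcases eq_or_lt_of_le (hp.1 a) with h0 | h0
  · rw [← h0]; ring
  · have hdf : 0 < dist p (fun x => (f x, h x)) (f a, h a) :=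
      lt_of_lt_of_le h0 (le_dist hp.1 (fun x => (f x, h x)) a)
    have hdg : 0 < dist p (fun x => (g x, h x)) (g a, h a) :=
      lt_of_lt_of_le h0 (le_dist hp.1 (fun x => (g x, h x)) a)
    have hdfg : 0 < dist p (fun x => ((f x, g x), h x)) ((f a, g a), h a) :=
      lt_of_lt_of_le h0 (le_dist hp.1 (fun x => ((f x, g x), h x)) a)
    have hdn : 0 < dist p h (h a) := lt_of_lt_of_le h0 (le_dist hp.1 h a)
    have e : Real.logb 2 (dist p (fun x => ((f x, g x), h x)) ((f a, g a), h a))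
        + Real.logb 2 (dist p h (h a))
        = Real.logb 2 (dist p (fun x => (f x, h x)) (f a, h a))
          + Real.logb 2 (dist p (fun x => (g x, h x)) (g a, h a)) := by
      rw [← Real.logb_mul hdfg.ne' hdn.ne', ← Real.logb_mul hdf.ne' hdg.ne',
        hfac (f a) (g a) (h a)]
    have e2 : Real.logb 2 (dist p (fun x => ((f x, g x), h x)) ((f a, g a), h a))
        + Real.logb 2 (dist p h (h a))
        - Real.logb 2 (dist p (fun x => (f x, h x)) (f a, h a))
        - Real.logb 2 (dist p (fun x => (g x, h x)) (g a, h a)) = 0 := by linarith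
    rw [e2, mul_zero]

end Aux3
section Aux4
variable {α β γ δ ε υ : Type} [Fintype α] [Fintype β] [Fintype γ] [Fintype δ]
  [Fintype ε] [Fintype υ]

lemma I2_expand (p : α → ℝ) (f : α → β) (g : α → γ) :
    I2 p f g = H p f + H p g - H p (fun a => (f a, g a)) := rfl

lemma Ic_symm (p : α → ℝ) (f : α → β) (g : α → γ) (h : α → δ) :
    Ic p f g h = Ic p g f h := by
  rw [Ic_expand, Ic_expand]
  have e : H p (fun a => ((g a, f a), h a)) = H p (fun a => ((f a, g a), h a)) :=
    H_relabel (σ := fun v : (β × γ) × δ => ((v.1.2, v.1.1), v.2))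
      (fun v w hvw => by simp_all [Prod.ext_iff]) p (fun a => ((f a, g a), h a))
  rw [e]; ring

lemma I2_symm (p : α → ℝ) (f : α → β) (g : α → γ) : I2 p f g = I2 p g f := by
  rw [I2_expand, I2_expand]
  have e : H p (fun a => (g a, f a)) = H p (fun a => (f a, g a)) :=
    H_relabel (σ := fun v : β × γ => (v.2, v.1))
      (fun v w hvw => by simp_all [Prod.ext_iff]) p (fun a => (f a, g a))
  rw [e]; ring

lemma Ic_relabel_g {σ : γ → ε} (hσ : Function.Injective σ) (p : α → ℝ)
    (f : α → β) (g : α → γ) (h : α → δ) :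
    Ic p f (fun a => σ (g a)) h = Ic p f g h := by
  rw [Ic_expand, Ic_expand]
  have e1 : H p (fun a => (σ (g a), h a)) = H p (fun a => (g a, h a)) :=
    H_relabel (σ := fun v : γ × δ => (σ v.1, v.2))
      (fun v w hvw => by simp_all [Prod.ext_iff, hσ.eq_iff]) p (fun a => (g a, h a))
  have e2 : H p (fun a => ((f a, σ (g a)), h a)) = H p (fun a => ((f a, g a), h a)) :=
    H_relabel (σ := fun v : (β × γ) × δ => ((v.1.1, σ v.1.2), v.2))
      (fun v w hvw => by simp_all [Prod.ext_iff, hσ.eq_iff]) p (fun a => ((f a, g a), h a))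
  rw [e1, e2]

lemma Ic_relabel_h {σ : δ → ε} (hσ : Function.Injective σ) (p : α → ℝ)
    (f : α → β) (g : α → γ) (h : α → δ) :
    Ic p f g (fun a => σ (h a)) = Ic p f g h := by
  rw [Ic_expand, Ic_expand]
  have e0 : H p (fun a => σ (h a)) = H p h := H_relabel hσ p h
  have e1 : H p (fun a => (f a, σ (h a))) = H p (fun a => (f a, h a)) :=
    H_relabel (σ := fun v : β × δ => (v.1, σ v.2))
      (fun v w hvw => by simp_all [Prod.ext_iff, hσ.eq_iff]) p (fun a => (f a, h a))
  have e2 : H p (fun a => (g a, σ (h a))) = H p (fun a => (g a, h a)) :=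
    H_relabel (σ := fun v : γ × δ => (v.1, σ v.2))
      (fun v w hvw => by simp_all [Prod.ext_iff, hσ.eq_iff]) p (fun a => (g a, h a))
  have e3 : H p (fun a => ((f a, g a), σ (h a))) = H p (fun a => ((f a, g a), h a)) :=
    H_relabel (σ := fun v : (β × γ) × δ => (v.1, σ v.2))
      (fun v w hvw => by simp_all [Prod.ext_iff, hσ.eq_iff]) p (fun a => ((f a, g a), h a))
  rw [e0, e1, e2, e3]

lemma I2_relabel_f {σ : β → ε} (hσ : Function.Injective σ) (p : α → ℝ)
    (f : α → β) (g : α → γ) :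
    I2 p (fun a => σ (f a)) g = I2 p f g := by
  rw [I2_expand, I2_expand]
  have e0 : H p (fun a => σ (f a)) = H p f := H_relabel hσ p f
  have e1 : H p (fun a => (σ (f a), g a)) = H p (fun a => (f a, g a)) :=
    H_relabel (σ := fun v : β × γ => (σ v.1, v.2))
      (fun v w hvw => by simp_all [Prod.ext_iff, hσ.eq_iff]) p (fun a => (f a, g a))
  rw [e0, e1]

lemma Ic_chain (p : α → ℝ) (f : α → β) (g : α → γ) (k : α → ε) (h : α → δ) :
    Ic p f (fun a => (g a, k a)) h = Ic p f g h + Ic p f k (fun a => (h a, g a)) := by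
  rw [Ic_expand, Ic_expand, Ic_expand]
  have e1 : H p (fun a => (f a, (h a, g a))) = H p (fun a => ((f a, g a), h a)) :=
    H_relabel (σ := fun v : (β × γ) × δ => (v.1.1, (v.2, v.1.2)))
      (fun v w hvw => by simp_all [Prod.ext_iff]) p (fun a => ((f a, g a), h a))
  have e2 : H p (fun a => (k a, (h a, g a))) = H p (fun a => ((g a, k a), h a)) :=
    H_relabel (σ := fun v : (γ × ε) × δ => (v.1.2, (v.2, v.1.1)))
      (fun v w hvw => by simp_all [Prod.ext_iff]) p (fun a => ((g a, k a), h a))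
  have e3 : H p (fun a => ((f a, k a), (h a, g a))) = H p (fun a => ((f a, (g a, k a)), h a)) :=
    H_relabel (σ := fun v : (β × (γ × ε)) × δ => ((v.1.1, v.1.2.2), (v.2, v.1.2.1)))
      (fun v w hvw => by simp_all [Prod.ext_iff]) p (fun a => ((f a, (g a, k a)), h a))
  have e4 : H p (fun a => (h a, g a)) = H p (fun a => (g a, h a)) :=
    H_relabel (σ := fun v : γ × δ => (v.2, v.1))
      (fun v w hvw => by simp_all [Prod.ext_iff]) p (fun a => (g a, h a))
  rw [e1, e2, e3, e4]; ring

lemma I2_chain (p : α → ℝ) (f : α → β) (g : α → γ) (u : α → υ) :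
    I2 p (fun a => (f a, g a)) u = I2 p f u + Ic p g u f := by
  rw [I2_expand, I2_expand, Ic_expand]
  have e1 : H p (fun a => (g a, f a)) = H p (fun a => (f a, g a)) :=
    H_relabel (σ := fun v : β × γ => (v.2, v.1))
      (fun v w hvw => by simp_all [Prod.ext_iff]) p (fun a => (f a, g a))
  have e2 : H p (fun a => (u a, f a)) = H p (fun a => (f a, u a)) :=
    H_relabel (σ := fun v : β × υ => (v.2, v.1))
      (fun v w hvw => by simp_all [Prod.ext_iff]) p (fun a => (f a, u a))
  have e3 : H p (fun a => ((g a, u a), f a)) = H p (fun a => ((f a, g a), u a)) :=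
    H_relabel (σ := fun v : (β × γ) × υ => ((v.1.2, v.2), v.1.1))
      (fun v w hvw => by simp_all [Prod.ext_iff]) p (fun a => ((f a, g a), u a))
  rw [e1, e2, e3]; ring

lemma Ic_eq_I2 (p : α → ℝ) (f : α → β) (g : α → γ) (u : α → υ) :
    Ic p f g u = I2 p f g - I2 p f u - I2 p g u + I2 p (fun a => (f a, g a)) u := by
  rw [Ic_expand, I2_expand, I2_expand, I2_expand, I2_expand]
  have e2 : H p (fun a => (u a, f a)) = H p (fun a => (f a, u a)) :=
    H_relabel (σ := fun v : β × υ => (v.2, v.1))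
      (fun v w hvw => by simp_all [Prod.ext_iff]) p (fun a => (f a, u a))
  ring

lemma I2_map (p : α → ℝ) (G : α → β) (f : β → γ) (g : β → δ) :
    I2 p (fun a => f (G a)) (fun a => g (G a)) = I2 (dist p G) f g := by
  have e1 : H p (fun a => f (G a)) = H (dist p G) f := H_map p G f
  have e2 : H p (fun a => g (G a)) = H (dist p G) g := H_map p G g
  have e3 : H p (fun a => (f (G a), g (G a))) = H (dist p G) (fun b => (f b, g b)) :=
    H_map p G (fun b => (f b, g b))
  rw [I2_expand, I2_expand, e1, e2, e3]

lemma Ic_map (p : α → ℝ) (G : α → β) (f : β → γ) (g : β → δ) (h : β → ε) :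
    Ic p (fun a => f (G a)) (fun a => g (G a)) (fun a => h (G a)) = Ic (dist p G) f g h := by
  have e0 : H p (fun a => h (G a)) = H (dist p G) h := H_map p G h
  have e1 : H p (fun a => (f (G a), h (G a))) = H (dist p G) (fun b => (f b, h b)) :=
    H_map p G (fun b => (f b, h b))
  have e2 : H p (fun a => (g (G a), h (G a))) = H (dist p G) (fun b => (g b, h b)) :=
    H_map p G (fun b => (g b, h b))
  have e3 : H p (fun a => ((f (G a), g (G a)), h (G a)))
      = H (dist p G) (fun b => ((f b, g b), h b)) := H_map p G (fun b => ((f b, g b), h b))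
  rw [Ic_expand, Ic_expand, e0, e1, e2, e3]

end Aux4
/-- data processing for the mutual information region. `P` is the joint pmf of
`(X₂, X₁, Y₁, Y₂)`; the Markov chain `X₂ − X₁ − Y₁ − Y₂` is expressed by the two vanishing
conditional mutual informations `I(X₂; Y₁,Y₂ | X₁) = 0` and `I(X₂,X₁; Y₂ | Y₁) = 0`. -/
theorem stmt7 {X₂ X₁ Y₁ Y₂ : Type} [Fintype X₂] [Fintype X₁] [Fintype Y₁] [Fintype Y₂]
    (P : X₂ × X₁ × Y₁ × Y₂ → ℝ) (hP : IsPMF P)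
    (hMarkov₁ : Ic P (fun a => a.1) (fun a => (a.2.2.1, a.2.2.2)) (fun a => a.2.1) = 0)
    (hMarkov₂ : Ic P (fun a => (a.1, a.2.1)) (fun a => a.2.2.2) (fun a => a.2.2.1) = 0) :
    ∀ v ∈ MIRegion (dist P (fun a => (a.2.1, a.2.2.1))),
      ∃ w ∈ MIRegion (dist P (fun a => (a.1, a.2.2.2))),
        w.1 ≤ v.1 ∧ w.2.1 ≤ v.2.1 ∧ w.2.2 ≤ v.2.2 ∧
        I2 (dist P (fun a => (a.1, a.2.2.2))) Prod.fst Prod.snd - w.1 - w.2.1 + w.2.2 ≤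
          I2 (dist P (fun a => (a.2.1, a.2.2.1))) Prod.fst Prod.snd - v.1 - v.2.1 + v.2.2 := by
  intro v hv
  obtain ⟨U, instU, q, ⟨hqPMF, hqmarg⟩, hveq⟩ := hv
  letI := instU
  classical
  set p₁ := dist P (fun a => (a.2.1, a.2.2.1)) with hp₁def
  set p₂ := dist P (fun a => (a.1, a.2.2.2)) with hp₂def
  set Q : (X₂ × X₁ × Y₁ × Y₂) × U → ℝ := fun z =>
    P z.1 * q (z.1.2.1, z.1.2.2.1, z.2) * (p₁ (z.1.2.1, z.1.2.2.1))⁻¹ with hQdef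
  have hq0 : ∀ x, 0 ≤ q x := hqPMF.1
  have hqmarg' : ∀ x y, (∑ u, q (x, y, u)) = p₁ (x, y) := fun x y => hqmarg x y
  have hp₁0 : ∀ xy, 0 ≤ p₁ xy := fun xy => by
    rw [hp₁def]; exact dist_nonneg' hP.1 _ xy
  have hqz : ∀ x y u, p₁ (x, y) = 0 → q (x, y, u) = 0 := by
    intro x y u h0
    have hs := hqmarg' x y
    rw [h0] at hs
    exact (Finset.sum_eq_zero_iff_of_nonneg (fun u _ => hq0 (x, y, u))).1 hs u
      (Finset.mem_univ u)
  have hPz : ∀ a : X₂ × X₁ × Y₁ × Y₂, p₁ (a.2.1, a.2.2.1) = 0 → P a = 0 := by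
    intro a h0
    have h1 : P a ≤ p₁ (a.2.1, a.2.2.1) := by
      rw [hp₁def]; exact le_dist hP.1 (fun a => (a.2.1, a.2.2.1)) a
    have h2 := hP.1 a
    rw [h0] at h1
    linarith
  have hQ0 : ∀ z, 0 ≤ Q z := fun z => by
    rw [hQdef]
    exact mul_nonneg (mul_nonneg (hP.1 z.1) (hq0 _)) (inv_nonneg.mpr (hp₁0 _))
  have hsumU : ∀ a, (∑ u, Q (a, u)) = P a := by
    intro a
    simp only [hQdef]
    rw [← Finset.sum_mul, ← Finset.mul_sum, hqmarg']
    rcases eq_or_ne (p₁ (a.2.1, a.2.2.1)) 0 with h0 | h0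
    · rw [h0]
      simp [hPz a h0]
    · rw [mul_assoc, mul_inv_cancel₀ h0, mul_one]
  have hQPMF : IsPMF Q := by
    refine ⟨hQ0, ?_⟩
    rw [Fintype.sum_prod_type, Finset.sum_congr rfl (fun a _ => hsumU a), hP.2]
  have hdistfst : dist Q Prod.fst = P := by
    funext a
    obtain ⟨a₁, a₂, a₃, a₄⟩ := a
    rw [← hsumU (a₁, a₂, a₃, a₄)]
    unfold dist
    simp only [Fintype.sum_prod_type, Prod.mk.injEq, ite_and, Finset.sum_ite_irrel,
      Finset.sum_const_zero, Finset.sum_ite_eq, Finset.sum_ite_eq', Finset.mem_univ, if_true]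
  have hp₁sum : ∀ x y, (∑ x₂', ∑ y₂', P (x₂', x, y, y₂')) = p₁ (x, y) := by
    intro x y
    rw [hp₁def]
    unfold dist
    simp only [Fintype.sum_prod_type, Prod.mk.injEq, ite_and, Finset.sum_ite_irrel,
      Finset.sum_const_zero, Finset.sum_ite_eq, Finset.sum_ite_eq', Finset.mem_univ, if_true]
    refine Finset.sum_congr rfl fun x₂' _ => ?_
    rw [Finset.sum_comm]
    simp
  have hdistG₁ : dist Q (fun z => (z.1.2.1, z.1.2.2.1, z.2)) = q := by
    funext t
    obtain ⟨x, y, u₀⟩ := t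
    unfold dist
    simp only [hQdef]
    simp only [Fintype.sum_prod_type, Prod.mk.injEq, ite_and, Finset.sum_ite_irrel,
      Finset.sum_const_zero, Finset.sum_ite_eq, Finset.sum_ite_eq', Finset.mem_univ, if_true]
    simp only [mul_assoc, ← Finset.sum_mul, ← Finset.mul_sum]
    rw [show (∑ x₂', ∑ y₂', P (x₂', x, y, y₂')) = p₁ (x, y) from hp₁sum x y]
    rcases eq_or_ne (p₁ (x, y)) 0 with h0 | h0
    · rw [h0]
      simp [hqz x y u₀ h0]
    · rw [mul_comm (q (x, y, u₀)), ← mul_assoc, mul_inv_cancel₀ h0, one_mul]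
  -- p₁, p₂ as distributions of Q
  have hp₁Q : dist Q (fun z => (z.1.2.1, z.1.2.2.1)) = p₁ := by
    funext xy
    rw [hp₁def, ← hdistfst]
    exact dist_comp Q Prod.fst (fun a => (a.2.1, a.2.2.1)) xy
  have hp₂Q : dist Q (fun z => (z.1.1, z.1.2.2.2)) = p₂ := by
    funext xy
    rw [hp₂def, ← hdistfst]
    exact dist_comp Q Prod.fst (fun a => (a.1, a.2.2.2)) xy
  -- the new auxiliary joint pmf
  set q₂ : X₂ × Y₂ × U → ℝ := dist Q (fun z => (z.1.1, z.1.2.2.2, z.2)) with hq₂def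
  have hq₂PMF : IsPMF q₂ := by rw [hq₂def]; exact IsPMF_dist hQPMF _
  have hq₂marg : ∀ x y, (∑ u, q₂ (x, y, u)) = p₂ (x, y) := by
    intro x y
    rw [hq₂def, ← hp₂Q]
    exact sum_dist_three Q (fun z => z.1.1) (fun z => z.1.2.2.2) (fun z => z.2) x y
  -- component transfers
  have hv1 : v.1 = I2 Q (fun z => z.1.2.1) (fun z => z.2) := by
    rw [hveq]
    show I2 q cX cU = _
    rw [← hdistG₁]
    exact (I2_map Q (fun z => (z.1.2.1, z.1.2.2.1, z.2)) cX cU).symm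
  have hv2 : v.2.1 = I2 Q (fun z => z.1.2.2.1) (fun z => z.2) := by
    rw [hveq]
    show I2 q cY cU = _
    rw [← hdistG₁]
    exact (I2_map Q (fun z => (z.1.2.1, z.1.2.2.1, z.2)) cY cU).symm
  have hv3 : v.2.2 = I2 Q (fun z => (z.1.2.1, z.1.2.2.1)) (fun z => z.2) := by
    rw [hveq]
    show I2 q cXY cU = _
    rw [← hdistG₁]
    exact (I2_map Q (fun z => (z.1.2.1, z.1.2.2.1, z.2)) cXY cU).symm
  have hw1 : I2 q₂ cX cU = I2 Q (fun z => z.1.1) (fun z => z.2) := by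
    rw [hq₂def]
    exact (I2_map Q (fun z => (z.1.1, z.1.2.2.2, z.2)) cX cU).symm
  have hw2 : I2 q₂ cY cU = I2 Q (fun z => z.1.2.2.2) (fun z => z.2) := by
    rw [hq₂def]
    exact (I2_map Q (fun z => (z.1.1, z.1.2.2.2, z.2)) cY cU).symm
  have hw3 : I2 q₂ cXY cU = I2 Q (fun z => (z.1.1, z.1.2.2.2)) (fun z => z.2) := by
    rw [hq₂def]
    exact (I2_map Q (fun z => (z.1.1, z.1.2.2.2, z.2)) cXY cU).symm
  have hI1 : I2 p₁ Prod.fst Prod.snd = I2 Q (fun z => z.1.2.1) (fun z => z.1.2.2.1) := by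
    rw [← hp₁Q]
    exact (I2_map Q (fun z => (z.1.2.1, z.1.2.2.1)) Prod.fst Prod.snd).symm
  have hI2 : I2 p₂ Prod.fst Prod.snd = I2 Q (fun z => z.1.1) (fun z => z.1.2.2.2) := by
    rw [← hp₂Q]
    exact (I2_map Q (fun z => (z.1.1, z.1.2.2.2)) Prod.fst Prod.snd).symm
  -- Markov condition transfers
  have hM1Q : Ic Q (fun z => z.1.1) (fun z => (z.1.2.2.1, z.1.2.2.2)) (fun z => z.1.2.1) = 0 := by
    rw [← hMarkov₁, ← hdistfst]
    exact Ic_map Q Prod.fst (fun a => a.1) (fun a => (a.2.2.1, a.2.2.2)) (fun a => a.2.1)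
  have hM2Q : Ic Q (fun z => (z.1.1, z.1.2.1)) (fun z => z.1.2.2.2) (fun z => z.1.2.2.1) = 0 := by
    rw [← hMarkov₂, ← hdistfst]
    exact Ic_map Q Prod.fst (fun a => (a.1, a.2.1)) (fun a => a.2.2.2) (fun a => a.2.2.1)
  -- conditional independences coming from the construction of Q
  have hCI1 : Ic Q (fun z => z.1.1) (fun z => z.2)
      (fun z => (z.1.2.1, (z.1.2.2.1, z.1.2.2.2))) = 0 := by
    apply Ic_eq_zero_of_factor hQPMF
    intro b c d
    obtain ⟨d₁, d₂, d₃⟩ := d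
    simp only [hQdef]
    unfold dist
    simp only [Fintype.sum_prod_type, Prod.mk.injEq, ite_and, Finset.sum_ite_irrel,
      Finset.sum_const_zero, Finset.sum_ite_eq, Finset.sum_ite_eq', Finset.mem_univ, if_true]
    simp only [mul_assoc, ← Finset.mul_sum, ← Finset.sum_mul]
    ring
  have hCI2 : Ic Q (fun z => z.1.2.2.2) (fun z => z.2)
      (fun z => (z.1.2.2.1, (z.1.1, z.1.2.1))) = 0 := by
    apply Ic_eq_zero_of_factor hQPMF
    intro b c d
    obtain ⟨d₁, d₂, d₃⟩ := d
    simp only [hQdef]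
    unfold dist
    simp only [Fintype.sum_prod_type, Prod.mk.injEq, ite_and, Finset.sum_ite_irrel,
      Finset.sum_const_zero, Finset.sum_ite_eq, Finset.sum_ite_eq', Finset.mem_univ, if_true]
    simp only [mul_assoc, ← Finset.mul_sum, ← Finset.sum_mul]
    ring
  have hCI3 : Ic Q (fun z => (z.1.1, z.1.2.2.2)) (fun z => z.2)
      (fun z => (z.1.2.1, z.1.2.2.1)) = 0 := by
    apply Ic_eq_zero_of_factor hQPMF
    intro b c d
    obtain ⟨b₁, b₂⟩ := b
    obtain ⟨d₁, d₂⟩ := d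
    simp only [hQdef]
    unfold dist
    simp only [Fintype.sum_prod_type, Prod.mk.injEq, ite_and, Finset.sum_ite_irrel,
      Finset.sum_const_zero, Finset.sum_ite_eq, Finset.sum_ite_eq', Finset.mem_univ, if_true]
    simp only [mul_assoc, ← Finset.mul_sum, ← Finset.sum_mul]
    ring
  -- chain-rule decompositions on the X side
  have hT : Ic Q (fun z => z.1.1) (fun z => ((z.1.2.2.1, z.1.2.2.2), z.2))
      (fun z => z.1.2.1) = 0 := by
    rw [Ic_chain Q (fun z => z.1.1) (fun z => (z.1.2.2.1, z.1.2.2.2)) (fun z => z.2)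
      (fun z => z.1.2.1), hM1Q, hCI1, add_zero]
  have hTswap : Ic Q (fun z => z.1.1) (fun z => (z.2, (z.1.2.2.1, z.1.2.2.2)))
      (fun z => z.1.2.1)
      = Ic Q (fun z => z.1.1) (fun z => ((z.1.2.2.1, z.1.2.2.2), z.2)) (fun z => z.1.2.1) :=
    Ic_relabel_g (σ := fun v : (Y₁ × Y₂) × U => (v.2, v.1))
      (fun v w h => by simp only [Prod.ext_iff] at h ⊢; tauto) Q (fun z => z.1.1)
      (fun z => ((z.1.2.2.1, z.1.2.2.2), z.2)) (fun z => z.1.2.1)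
  have hdec1 := Ic_chain Q (fun z : (X₂ × X₁ × Y₁ × Y₂) × U => z.1.1) (fun z => z.2)
    (fun z => (z.1.2.2.1, z.1.2.2.2)) (fun z => z.1.2.1)
  have n1 := Ic_nonneg hQPMF (fun z : (X₂ × X₁ × Y₁ × Y₂) × U => z.1.1) (fun z => z.2)
    (fun z => z.1.2.1)
  have n2 := Ic_nonneg hQPMF (fun z : (X₂ × X₁ × Y₁ × Y₂) × U => z.1.1)
    (fun z => (z.1.2.2.1, z.1.2.2.2)) (fun z => (z.1.2.1, z.2))
  rw [hTswap, hT] at hdec1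
  have hE1 : Ic Q (fun z => z.1.1) (fun z => z.2) (fun z => z.1.2.1) = 0 := by linarith
  have hE2 : Ic Q (fun z => z.1.1) (fun z => (z.1.2.2.1, z.1.2.2.2))
      (fun z => (z.1.2.1, z.2)) = 0 := by linarith
  -- chain-rule decompositions on the Y side
  have hT2 : Ic Q (fun z => z.1.2.2.2) (fun z => ((z.1.1, z.1.2.1), z.2))
      (fun z => z.1.2.2.1) = 0 := by
    rw [Ic_chain Q (fun z => z.1.2.2.2) (fun z => (z.1.1, z.1.2.1)) (fun z => z.2)
      (fun z => z.1.2.2.1),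
      Ic_symm Q (fun z => z.1.2.2.2) (fun z => (z.1.1, z.1.2.1)) (fun z => z.1.2.2.1),
      hM2Q, hCI2, add_zero]
  have hT2swap : Ic Q (fun z => z.1.2.2.2) (fun z => (z.2, (z.1.1, z.1.2.1)))
      (fun z => z.1.2.2.1)
      = Ic Q (fun z => z.1.2.2.2) (fun z => ((z.1.1, z.1.2.1), z.2)) (fun z => z.1.2.2.1) :=
    Ic_relabel_g (σ := fun v : (X₂ × X₁) × U => (v.2, v.1))
      (fun v w h => by simp only [Prod.ext_iff] at h ⊢; tauto) Q (fun z => z.1.2.2.2)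
      (fun z => ((z.1.1, z.1.2.1), z.2)) (fun z => z.1.2.2.1)
  have hdec2 := Ic_chain Q (fun z : (X₂ × X₁ × Y₁ × Y₂) × U => z.1.2.2.2) (fun z => z.2)
    (fun z => (z.1.1, z.1.2.1)) (fun z => z.1.2.2.1)
  have n3 := Ic_nonneg hQPMF (fun z : (X₂ × X₁ × Y₁ × Y₂) × U => z.1.2.2.2) (fun z => z.2)
    (fun z => z.1.2.2.1)
  have n4 := Ic_nonneg hQPMF (fun z : (X₂ × X₁ × Y₁ × Y₂) × U => z.1.2.2.2)
    (fun z => (z.1.1, z.1.2.1)) (fun z => (z.1.2.2.1, z.2))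
  rw [hT2swap, hT2] at hdec2
  have hE3 : Ic Q (fun z => z.1.2.2.2) (fun z => z.2) (fun z => z.1.2.2.1) = 0 := by linarith
  have hE4 : Ic Q (fun z => z.1.2.2.2) (fun z => (z.1.1, z.1.2.1))
      (fun z => (z.1.2.2.1, z.2)) = 0 := by linarith
  -- inequality (A)
  have hA : I2 Q (fun z => z.1.1) (fun z => z.2) ≤ I2 Q (fun z => z.1.2.1) (fun z => z.2) := by
    have c1 := I2_chain Q (fun z : (X₂ × X₁ × Y₁ × Y₂) × U => z.1.2.1) (fun z => z.1.1)
      (fun z => z.2)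
    have c2 := I2_chain Q (fun z : (X₂ × X₁ × Y₁ × Y₂) × U => z.1.1) (fun z => z.1.2.1)
      (fun z => z.2)
    have c3 : I2 Q (fun z : (X₂ × X₁ × Y₁ × Y₂) × U => (z.1.1, z.1.2.1)) (fun z => z.2)
        = I2 Q (fun z => (z.1.2.1, z.1.1)) (fun z => z.2) :=
      I2_relabel_f (σ := fun v : X₁ × X₂ => (v.2, v.1))
        (fun v w h => by simp only [Prod.ext_iff] at h ⊢; tauto) Q (fun z => (z.1.2.1, z.1.1)) (fun z => z.2)
    have c4 := Ic_nonneg hQPMF (fun z : (X₂ × X₁ × Y₁ × Y₂) × U => z.1.2.1) (fun z => z.2)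
      (fun z => z.1.1)
    linarith
  -- inequality (B)
  have hB : I2 Q (fun z => z.1.2.2.2) (fun z => z.2)
      ≤ I2 Q (fun z => z.1.2.2.1) (fun z => z.2) := by
    have c1 := I2_chain Q (fun z : (X₂ × X₁ × Y₁ × Y₂) × U => z.1.2.2.1) (fun z => z.1.2.2.2)
      (fun z => z.2)
    have c2 := I2_chain Q (fun z : (X₂ × X₁ × Y₁ × Y₂) × U => z.1.2.2.2) (fun z => z.1.2.2.1)
      (fun z => z.2)
    have c3 : I2 Q (fun z : (X₂ × X₁ × Y₁ × Y₂) × U => (z.1.2.2.2, z.1.2.2.1)) (fun z => z.2)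
        = I2 Q (fun z => (z.1.2.2.1, z.1.2.2.2)) (fun z => z.2) :=
      I2_relabel_f (σ := fun v : Y₁ × Y₂ => (v.2, v.1))
        (fun v w h => by simp only [Prod.ext_iff] at h ⊢; tauto) Q (fun z => (z.1.2.2.1, z.1.2.2.2))
        (fun z => z.2)
    have c4 := Ic_nonneg hQPMF (fun z : (X₂ × X₁ × Y₁ × Y₂) × U => z.1.2.2.1) (fun z => z.2)
      (fun z => z.1.2.2.2)
    linarith
  -- inequality (C)
  have hCineq : I2 Q (fun z => (z.1.1, z.1.2.2.2)) (fun z => z.2)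
      ≤ I2 Q (fun z => (z.1.2.1, z.1.2.2.1)) (fun z => z.2) := by
    have c1 := I2_chain Q (fun z : (X₂ × X₁ × Y₁ × Y₂) × U => (z.1.2.1, z.1.2.2.1))
      (fun z => (z.1.1, z.1.2.2.2)) (fun z => z.2)
    have c2 := I2_chain Q (fun z : (X₂ × X₁ × Y₁ × Y₂) × U => (z.1.1, z.1.2.2.2))
      (fun z => (z.1.2.1, z.1.2.2.1)) (fun z => z.2)
    have c3 : I2 Q (fun z : (X₂ × X₁ × Y₁ × Y₂) × U => ((z.1.1, z.1.2.2.2), (z.1.2.1, z.1.2.2.1)))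
        (fun z => z.2)
        = I2 Q (fun z => ((z.1.2.1, z.1.2.2.1), (z.1.1, z.1.2.2.2))) (fun z => z.2) :=
      I2_relabel_f (σ := fun v : (X₁ × Y₁) × (X₂ × Y₂) => (v.2, v.1))
        (fun v w h => by simp only [Prod.ext_iff] at h ⊢; tauto) Q
        (fun z => ((z.1.2.1, z.1.2.2.1), (z.1.1, z.1.2.2.2))) (fun z => z.2)
    have c4 := Ic_nonneg hQPMF (fun z : (X₂ × X₁ × Y₁ × Y₂) × U => (z.1.2.1, z.1.2.2.1))
      (fun z => z.2) (fun z => (z.1.1, z.1.2.2.2))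
    linarith
  -- inequality (D)
  have hF1 : Ic Q (fun z => z.1.1) (fun z => z.1.2.2.2) (fun z => (z.2, z.1.2.2.1)) = 0 := by
    have ch := Ic_chain Q (fun z : (X₂ × X₁ × Y₁ × Y₂) × U => z.1.2.2.2) (fun z => z.1.1)
      (fun z => z.1.2.1) (fun z => (z.1.2.2.1, z.2))
    have m1 := Ic_nonneg hQPMF (fun z : (X₂ × X₁ × Y₁ × Y₂) × U => z.1.2.2.2)
      (fun z => z.1.1) (fun z => (z.1.2.2.1, z.2))
    have m2 := Ic_nonneg hQPMF (fun z : (X₂ × X₁ × Y₁ × Y₂) × U => z.1.2.2.2)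
      (fun z => z.1.2.1) (fun z => ((z.1.2.2.1, z.2), z.1.1))
    rw [hE4] at ch
    have hF1' : Ic Q (fun z => z.1.2.2.2) (fun z => z.1.1) (fun z => (z.1.2.2.1, z.2)) = 0 := by
      linarith
    have s1 : Ic Q (fun z : (X₂ × X₁ × Y₁ × Y₂) × U => z.1.1) (fun z => z.1.2.2.2)
        (fun z => (z.2, z.1.2.2.1))
        = Ic Q (fun z => z.1.1) (fun z => z.1.2.2.2) (fun z => (z.1.2.2.1, z.2)) :=
      Ic_relabel_h (σ := fun v : Y₁ × U => (v.2, v.1))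
        (fun v w h => by simp only [Prod.ext_iff] at h ⊢; tauto) Q (fun z => z.1.1) (fun z => z.1.2.2.2)
        (fun z => (z.1.2.2.1, z.2))
    rw [s1, Ic_symm]
    exact hF1'
  have hF2 : Ic Q (fun z => z.1.2.2.1) (fun z => z.1.1) (fun z => (z.2, z.1.2.1)) = 0 := by
    have ch := Ic_chain Q (fun z : (X₂ × X₁ × Y₁ × Y₂) × U => z.1.1) (fun z => z.1.2.2.1)
      (fun z => z.1.2.2.2) (fun z => (z.1.2.1, z.2))
    have m1 := Ic_nonneg hQPMF (fun z : (X₂ × X₁ × Y₁ × Y₂) × U => z.1.1)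
      (fun z => z.1.2.2.1) (fun z => (z.1.2.1, z.2))
    have m2 := Ic_nonneg hQPMF (fun z : (X₂ × X₁ × Y₁ × Y₂) × U => z.1.1)
      (fun z => z.1.2.2.2) (fun z => ((z.1.2.1, z.2), z.1.2.2.1))
    rw [hE2] at ch
    have hF2' : Ic Q (fun z => z.1.1) (fun z => z.1.2.2.1) (fun z => (z.1.2.1, z.2)) = 0 := by
      linarith
    have s1 : Ic Q (fun z : (X₂ × X₁ × Y₁ × Y₂) × U => z.1.2.2.1) (fun z => z.1.1)
        (fun z => (z.2, z.1.2.1))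
        = Ic Q (fun z => z.1.2.2.1) (fun z => z.1.1) (fun z => (z.1.2.1, z.2)) :=
      Ic_relabel_h (σ := fun v : X₁ × U => (v.2, v.1))
        (fun v w h => by simp only [Prod.ext_iff] at h ⊢; tauto) Q (fun z => z.1.2.2.1) (fun z => z.1.1)
        (fun z => (z.1.2.1, z.2))
    rw [s1, Ic_symm]
    exact hF2'
  have hS1 : Ic Q (fun z => z.1.1) (fun z => z.1.2.2.2) (fun z => z.2)
      ≤ Ic Q (fun z => z.1.1) (fun z => z.1.2.2.1) (fun z => z.2) := by
    have d1 := Ic_chain Q (fun z : (X₂ × X₁ × Y₁ × Y₂) × U => z.1.1) (fun z => z.1.2.2.1)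
      (fun z => z.1.2.2.2) (fun z => z.2)
    have d2 := Ic_chain Q (fun z : (X₂ × X₁ × Y₁ × Y₂) × U => z.1.1) (fun z => z.1.2.2.2)
      (fun z => z.1.2.2.1) (fun z => z.2)
    have d3 : Ic Q (fun z : (X₂ × X₁ × Y₁ × Y₂) × U => z.1.1)
        (fun z => (z.1.2.2.2, z.1.2.2.1)) (fun z => z.2)
        = Ic Q (fun z => z.1.1) (fun z => (z.1.2.2.1, z.1.2.2.2)) (fun z => z.2) :=
      Ic_relabel_g (σ := fun v : Y₁ × Y₂ => (v.2, v.1))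
        (fun v w h => by simp only [Prod.ext_iff] at h ⊢; tauto) Q (fun z => z.1.1)
        (fun z => (z.1.2.2.1, z.1.2.2.2)) (fun z => z.2)
    have m1 := Ic_nonneg hQPMF (fun z : (X₂ × X₁ × Y₁ × Y₂) × U => z.1.1)
      (fun z => z.1.2.2.1) (fun z => (z.2, z.1.2.2.2))
    rw [hF1] at d1
    linarith
  have hS2 : Ic Q (fun z => z.1.1) (fun z => z.1.2.2.1) (fun z => z.2)
      ≤ Ic Q (fun z => z.1.2.1) (fun z => z.1.2.2.1) (fun z => z.2) := by
    have d1 := Ic_chain Q (fun z : (X₂ × X₁ × Y₁ × Y₂) × U => z.1.2.2.1) (fun z => z.1.2.1)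
      (fun z => z.1.1) (fun z => z.2)
    have d2 := Ic_chain Q (fun z : (X₂ × X₁ × Y₁ × Y₂) × U => z.1.2.2.1) (fun z => z.1.1)
      (fun z => z.1.2.1) (fun z => z.2)
    have d3 : Ic Q (fun z : (X₂ × X₁ × Y₁ × Y₂) × U => z.1.2.2.1)
        (fun z => (z.1.1, z.1.2.1)) (fun z => z.2)
        = Ic Q (fun z => z.1.2.2.1) (fun z => (z.1.2.1, z.1.1)) (fun z => z.2) :=
      Ic_relabel_g (σ := fun v : X₁ × X₂ => (v.2, v.1))
        (fun v w h => by simp only [Prod.ext_iff] at h ⊢; tauto) Q (fun z => z.1.2.2.1)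
        (fun z => (z.1.2.1, z.1.1)) (fun z => z.2)
    have m1 := Ic_nonneg hQPMF (fun z : (X₂ × X₁ × Y₁ × Y₂) × U => z.1.2.2.1)
      (fun z => z.1.2.1) (fun z => (z.2, z.1.1))
    rw [hF2] at d1
    have s2 : Ic Q (fun z : (X₂ × X₁ × Y₁ × Y₂) × U => z.1.1) (fun z => z.1.2.2.1)
        (fun z => z.2)
        = Ic Q (fun z => z.1.2.2.1) (fun z => z.1.1) (fun z => z.2) :=
      Ic_symm Q (fun z => z.1.1) (fun z => z.1.2.2.1) (fun z => z.2)
    have s3 : Ic Q (fun z : (X₂ × X₁ × Y₁ × Y₂) × U => z.1.2.1) (fun z => z.1.2.2.1)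
        (fun z => z.2)
        = Ic Q (fun z => z.1.2.2.1) (fun z => z.1.2.1) (fun z => z.2) :=
      Ic_symm Q (fun z => z.1.2.1) (fun z => z.1.2.2.1) (fun z => z.2)
    linarith
  have k1 : Ic Q (fun z => z.1.1) (fun z => z.1.2.2.2) (fun z => z.2)
      = I2 Q (fun z => z.1.1) (fun z => z.1.2.2.2)
        - I2 Q (fun z => z.1.1) (fun z => z.2) - I2 Q (fun z => z.1.2.2.2) (fun z => z.2)
        + I2 Q (fun z => (z.1.1, z.1.2.2.2)) (fun z => z.2) :=
    Ic_eq_I2 Q (fun z => z.1.1) (fun z => z.1.2.2.2) (fun z => z.2)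
  have k2 : Ic Q (fun z => z.1.2.1) (fun z => z.1.2.2.1) (fun z => z.2)
      = I2 Q (fun z => z.1.2.1) (fun z => z.1.2.2.1)
        - I2 Q (fun z => z.1.2.1) (fun z => z.2) - I2 Q (fun z => z.1.2.2.1) (fun z => z.2)
        + I2 Q (fun z => (z.1.2.1, z.1.2.2.1)) (fun z => z.2) :=
    Ic_eq_I2 Q (fun z => z.1.2.1) (fun z => z.1.2.2.1) (fun z => z.2)
  refine ⟨(I2 q₂ cX cU, I2 q₂ cY cU, I2 q₂ cXY cU),
    ⟨U, instU, q₂, ⟨hq₂PMF, hq₂marg⟩, rfl⟩, ?_, ?_, ?_, ?_⟩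
  · show I2 q₂ cX cU ≤ v.1
    rw [hv1, hw1]
    exact hA
  · show I2 q₂ cY cU ≤ v.2.1
    rw [hv2, hw2]
    exact hB
  · show I2 q₂ cXY cU ≤ v.2.2
    rw [hv3, hw3]
    exact hCineq
  · show I2 p₂ Prod.fst Prod.snd - I2 q₂ cX cU - I2 q₂ cY cU + I2 q₂ cXY cU ≤ _
    rw [hv1, hv2, hv3, hw1, hw2, hw3, hI1, hI2]
    linarith [le_trans hS1 hS2]

end GW
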